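/- Let d ≥ 1 and A ⊆ ℤ^d. Then the limits lim_{i→∞} d̄(A_{[i]}), lim_{i→∞} d̄(A^{[i]}), and lim_{i→∞} d̄(A + [-i,i]^d) all exist and are equal. -/

import Mathlib

open Filter Pointwise

/-- The `d`-dimensional cube `[-m, m]^d` in `ℤ^d`. -/
def cube (d m : ℕ) : Set (Fin d → ℤ) :=
  Set.Icc (fun _ => -(m : ℤ)) (fun _ => (m : ℤ))

/-- The `n`-block set `A_{[n]} = {x : (n·x + [0, n-1]^d) ∩ A ≠ ∅}`. -/
def blockSet (d : ℕ) (A : Set (Fin d → ℤ)) (n : ℕ) : Set (Fin d → ℤ) :=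
  {x | ∃ t ∈ Set.Icc (0 : Fin d → ℤ) (fun _ => (n : ℤ) - 1), (n : ℤ) • x + t ∈ A}

/-- The set `A^{[n]} = n·A_{[n]} + [0, n-1]^d`. -/
def superBlockSet (d : ℕ) (A : Set (Fin d → ℤ)) (n : ℕ) : Set (Fin d → ℤ) :=
  {w | ∃ x ∈ blockSet d A n,
    ∃ t ∈ Set.Icc (0 : Fin d → ℤ) (fun _ => (n : ℤ) - 1), w = (n : ℤ) • x + t}

/-- Upper asymptotic density of `A ⊆ ℤ^d`. -/
noncomputable def upperDensity (d : ℕ) (A : Set (Fin d → ℤ)) : ℝ :=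
  limsup (fun n : ℕ => (Set.ncard (A ∩ cube d n) : ℝ) / (2 * (n : ℝ) + 1) ^ d) atTop

def scaled (d n : ℕ) (B : Set (Fin d → ℤ)) : Set (Fin d → ℤ) :=
  {w | ∃ x ∈ B, ∃ t ∈ Set.Icc (0 : Fin d → ℤ) (fun _ => (n : ℤ) - 1), w = (n : ℤ) • x + t}

lemma ncard_Icc_pi (d : ℕ) (lo hi : ℤ) :
    (Set.Icc (fun _ => lo) (fun _ => hi) : Set (Fin d → ℤ)).ncard = (hi + 1 - lo).toNat ^ d := by
  rw [← Finset.coe_Icc, Set.ncard_coe_finset, Pi.card_Icc]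
  simp [Int.card_Icc]

lemma cube_finite (d m : ℕ) : (cube d m).Finite := Set.finite_Icc _ _

lemma ncard_cube (d m : ℕ) : (cube d m).ncard = (2 * m + 1) ^ d := by
  rw [cube, ncard_Icc_pi]
  congr 1
  omega

lemma Set.ncard_prod' {α β : Type*} (s : Set α) (t : Set β) :
    (s ×ˢ t).ncard = s.ncard * t.ncard := by
  rw [← Nat.card_coe_set_eq, ← Nat.card_coe_set_eq, ← Nat.card_coe_set_eq,
    ← Nat.card_prod]
  exact Nat.card_congr (Equiv.Set.prod s t)

lemma int_lt_of_mul (n X M K : ℤ) (hn : 0 < n) (h1 : n * X ≤ M) (h2 : M < n * K) : X < K := by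
  by_contra h
  push_neg at h
  have := mul_le_mul_of_nonneg_left h hn.le
  omega

lemma int_uniq (n X T X' T' : ℤ) (hn : 0 < n) (hT : 0 ≤ T) (hT2 : T < n)
    (hT' : 0 ≤ T') (hT2' : T' < n) (he : n * X + T = n * X' + T') : X = X' ∧ T = T' := by
  have hX : X = X' := by
    rcases lt_trichotomy X X' with h | h | h
    · have := mul_le_mul_of_nonneg_left (show X + 1 ≤ X' by omega) hn.le
      rw [mul_add, mul_one] at this
      omega
    · exact h
    · have := mul_le_mul_of_nonneg_left (show X' + 1 ≤ X by omega) hn.le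
      rw [mul_add, mul_one] at this
      omega
  subst hX
  omega

lemma int_div_exists (n a : ℤ) (hn : 0 < n) : ∃ x t : ℤ, 0 ≤ t ∧ t ≤ n - 1 ∧ a = n * x + t := by
  refine ⟨a / n, a % n, Int.emod_nonneg a hn.ne', ?_, ?_⟩
  · have := Int.emod_lt_of_pos a hn; omega
  · rw [eq_comm]
    exact Int.mul_ediv_add_emod a n

lemma mem_cube {d m : ℕ} {w : Fin d → ℤ} : w ∈ cube d m ↔ ∀ j, -(m : ℤ) ≤ w j ∧ w j ≤ m := by
  simp [cube, Set.mem_Icc, Pi.le_def, forall_and]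

/-- Master upper counting lemma. -/
lemma count_upper {d : ℕ} (n i m : ℕ) (hn : 1 ≤ n) (C B : Set (Fin d → ℤ))
    (h : ∀ w ∈ C, ∃ x ∈ B, ∀ j, -(i : ℤ) ≤ w j - n * x j ∧ w j - n * x j ≤ n - 1 + i) :
    (C ∩ cube d m).ncard ≤ (B ∩ cube d ((m + i) / n + 1)).ncard * (n + 2 * i) ^ d := by
  classical
  set k' : ℕ := (m + i) / n + 1 with hk'
  have hnk : m + i + 1 ≤ n * k' := by
    have hdm : n * ((m + i) / n) + (m + i) % n = m + i := Nat.div_add_mod _ _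
    have hmod : (m + i) % n < n := Nat.mod_lt _ (by omega)
    have : n * k' = n * ((m + i) / n) + n := by rw [hk']; ring
    omega
  have hnkZ : ((m : ℤ) + i) + 1 ≤ (n : ℤ) * k' := by exact_mod_cast hnk
  choose! x hxB hxb using h
  have hxcube : ∀ w ∈ C ∩ cube d m, x w ∈ cube d k' := by
    rintro w ⟨hwC, hwm⟩
    have hb := hxb w hwC
    have hwcube := mem_cube.1 hwm
    refine mem_cube.2 fun j => ?_
    have h1 := (hb j).1
    have h2 := (hb j).2
    have h3 := (hwcube j).1
    have h4 := (hwcube j).2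
    have hup : (n : ℤ) * x w j ≤ (m : ℤ) + i := by omega
    have hlo : -((m : ℤ) + i) - (n - 1) ≤ (n : ℤ) * x w j := by omega
    constructor
    · have : -(x w j) < (k' : ℤ) + 1 := by
        refine int_lt_of_mul n _ ((m : ℤ) + i + n - 1) _ (by exact_mod_cast hn) ?_ ?_
        · rw [mul_neg]; omega
        · have : (n : ℤ) * ((k' : ℤ) + 1) = n * k' + n := by ring
          omega
      omega
    · have : x w j < (k' : ℤ) :=
        int_lt_of_mul n _ ((m : ℤ) + i) _ (by exact_mod_cast hn) hup (by omega)
      omega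
  have hinj : Set.InjOn (fun w => (x w, w - (n : ℤ) • x w)) (C ∩ cube d m) := by
    intro w1 _ w2 _ he
    have h1 : x w1 = x w2 := congrArg Prod.fst he
    have h2 : w1 - (n : ℤ) • x w1 = w2 - (n : ℤ) • x w2 := congrArg Prod.snd he
    rw [h1] at h2
    exact sub_left_injective h2
  have hmaps : ((fun w => (x w, w - (n : ℤ) • x w)) '' (C ∩ cube d m)) ⊆
      (B ∩ cube d k') ×ˢ (Set.Icc (fun _ => -(i : ℤ)) (fun _ => (n : ℤ) - 1 + i)) := by
    rintro _ ⟨w, hw, rfl⟩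
    have hb := hxb w hw.1
    refine ⟨⟨hxB w hw.1, hxcube w hw⟩, ?_⟩
    rw [Set.mem_Icc]
    constructor <;> intro j <;> simp only [Pi.sub_apply, Pi.smul_apply, smul_eq_mul] <;>
      [exact (hb j).1; exact (hb j).2]
  have htoNat : (((n : ℤ) - 1 + i) + 1 - -(i : ℤ)).toNat = n + 2 * i := by omega
  calc (C ∩ cube d m).ncard
      = ((fun w => (x w, w - (n : ℤ) • x w)) '' (C ∩ cube d m)).ncard :=
        (Set.ncard_image_of_injOn hinj).symm
    _ ≤ ((B ∩ cube d k') ×ˢ (Set.Icc (fun _ => -(i : ℤ)) (fun _ => (n : ℤ) - 1 + i))).ncard :=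
        Set.ncard_le_ncard hmaps
          (Set.Finite.prod ((cube_finite d k').inter_of_right B) (Set.finite_Icc _ _))
    _ = (B ∩ cube d k').ncard * (n + 2 * i) ^ d := by
        rw [Set.ncard_prod', ncard_Icc_pi, htoNat]

lemma mem_box {d n : ℕ} {t : Fin d → ℤ} :
    t ∈ Set.Icc (0 : Fin d → ℤ) (fun _ => (n : ℤ) - 1) ↔ ∀ j, 0 ≤ t j ∧ t j ≤ (n : ℤ) - 1 := by
  simp [Set.mem_Icc, Pi.le_def, forall_and]

/-- Lower counting lemma. -/
lemma count_lower {d : ℕ} (n k : ℕ) (hn : 1 ≤ n) (B : Set (Fin d → ℤ)) :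
    (B ∩ cube d k).ncard * n ^ d ≤ (scaled d n B ∩ cube d (n * k + n - 1)).ncard := by
  classical
  set P : Set ((Fin d → ℤ) × (Fin d → ℤ)) :=
    (B ∩ cube d k) ×ˢ (Set.Icc (0 : Fin d → ℤ) (fun _ => (n : ℤ) - 1)) with hP
  have hnZ : (0 : ℤ) < n := by exact_mod_cast hn
  have hinj : Set.InjOn (fun p : (Fin d → ℤ) × (Fin d → ℤ) => (n : ℤ) • p.1 + p.2) P := by
    rintro ⟨x1, t1⟩ ⟨hx1, ht1⟩ ⟨x2, t2⟩ ⟨hx2, ht2⟩ he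
    dsimp only at ht1 ht2 he ⊢
    simp only [Prod.mk.injEq]
    rw [mem_box] at ht1 ht2
    have hco : ∀ j, x1 j = x2 j ∧ t1 j = t2 j := by
      intro j
      have hj : (n : ℤ) * x1 j + t1 j = (n : ℤ) * x2 j + t2 j := by
        have := congrFun he j
        simpa [Pi.add_apply, Pi.smul_apply, smul_eq_mul] using this
      exact int_uniq n _ _ _ _ hnZ (ht1 j).1 (by have := (ht1 j).2; omega)
        (ht2 j).1 (by have := (ht2 j).2; omega) hj
    exact ⟨funext fun j => (hco j).1, funext fun j => (hco j).2⟩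
  have hmaps : ((fun p : (Fin d → ℤ) × (Fin d → ℤ) => (n : ℤ) • p.1 + p.2) '' P) ⊆
      scaled d n B ∩ cube d (n * k + n - 1) := by
    rintro _ ⟨⟨xx, tt⟩, ⟨⟨hxB, hxc⟩, htb⟩, rfl⟩
    replace hxB : xx ∈ B := hxB
    replace hxc : xx ∈ cube d k := hxc
    replace htb : tt ∈ Set.Icc (0 : Fin d → ℤ) (fun _ => (n : ℤ) - 1) := htb
    show (n : ℤ) • xx + tt ∈ _
    refine ⟨⟨xx, hxB, tt, htb, rfl⟩, mem_cube.2 fun j => ?_⟩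
    rw [mem_box] at htb
    have h1 := (mem_cube.1 hxc j).1
    have h2 := (mem_cube.1 hxc j).2
    have h3 := (htb j).1
    have h4 := (htb j).2
    have hcast : ((n * k + n - 1 : ℕ) : ℤ) = (n : ℤ) * k + n - 1 := by
      push_cast [Nat.cast_sub (by nlinarith : 1 ≤ n * k + n)]
      ring
    simp only [Pi.add_apply, Pi.smul_apply, smul_eq_mul]
    rw [hcast]
    have hu : (n : ℤ) * xx j ≤ n * k := mul_le_mul_of_nonneg_left h2 hnZ.le
    have hl : -((n : ℤ) * k) ≤ n * xx j := by
      have := mul_le_mul_of_nonneg_left h1 hnZ.le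
      rw [mul_neg] at this
      omega
    omega
  calc (B ∩ cube d k).ncard * n ^ d = P.ncard := by
        have h0 : (0 : Fin d → ℤ) = fun _ => (0 : ℤ) := rfl
        rw [hP, Set.ncard_prod', h0, ncard_Icc_pi]
        congr 2
        omega
    _ = ((fun p : (Fin d → ℤ) × (Fin d → ℤ) => (n : ℤ) • p.1 + p.2) '' P).ncard :=
        (Set.ncard_image_of_injOn hinj).symm
    _ ≤ (scaled d n B ∩ cube d (n * k + n - 1)).ncard :=
        Set.ncard_le_ncard hmaps ((cube_finite d _).inter_of_right _)

noncomputable def densSeq (d : ℕ) (A : Set (Fin d → ℤ)) (m : ℕ) : ℝ :=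
  ((A ∩ cube d m).ncard : ℝ) / (2 * (m : ℝ) + 1) ^ d

lemma upperDensity_eq (d : ℕ) (A : Set (Fin d → ℤ)) :
    upperDensity d A = limsup (densSeq d A) atTop := rfl

lemma densSeq_nonneg (d : ℕ) (A : Set (Fin d → ℤ)) (m : ℕ) : 0 ≤ densSeq d A m := by
  unfold densSeq; positivity

lemma densSeq_le_one (d : ℕ) (A : Set (Fin d → ℤ)) (m : ℕ) : densSeq d A m ≤ 1 := by
  rw [densSeq, div_le_one (by positivity)]
  have h1 : (A ∩ cube d m).ncard ≤ (2 * m + 1) ^ d := by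
    rw [← ncard_cube d m]
    exact Set.ncard_le_ncard Set.inter_subset_right (cube_finite d m)
  calc ((A ∩ cube d m).ncard : ℝ) ≤ (((2 * m + 1) ^ d : ℕ) : ℝ) := by exact_mod_cast h1
    _ = (2 * (m : ℝ) + 1) ^ d := by push_cast; ring

lemma upperDensity_nonneg (d : ℕ) (A : Set (Fin d → ℤ)) : 0 ≤ upperDensity d A :=
  le_limsup_of_frequently_le (Frequently.of_forall (densSeq_nonneg d A))
    (isBoundedUnder_of ⟨1, densSeq_le_one d A⟩)

lemma upperDensity_le_one (d : ℕ) (A : Set (Fin d → ℤ)) : upperDensity d A ≤ 1 :=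
  limsup_le_of_le (isCoboundedUnder_le_of_le atTop (densSeq_nonneg d A))
    (Eventually.of_forall (densSeq_le_one d A))

lemma upperDensity_mono (d : ℕ) {A B : Set (Fin d → ℤ)} (h : A ⊆ B) :
    upperDensity d A ≤ upperDensity d B := by
  rw [upperDensity_eq, upperDensity_eq]
  refine limsup_le_limsup (Eventually.of_forall fun m => ?_)
    (isCoboundedUnder_le_of_le atTop (densSeq_nonneg d A))
    (isBoundedUnder_of ⟨1, densSeq_le_one d B⟩)
  have hn : (A ∩ cube d m).ncard ≤ (B ∩ cube d m).ncard :=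
    Set.ncard_le_ncard (Set.inter_subset_inter_left _ h) ((cube_finite d m).inter_of_right _)
  unfold densSeq
  have hn' : ((A ∩ cube d m).ncard : ℝ) ≤ ((B ∩ cube d m).ncard : ℝ) := by exact_mod_cast hn
  gcongr

lemma limsup_le_mul_limsup (u v : ℕ → ℝ) (φ : ℕ → ℕ) (c : ℝ) (hc : 0 ≤ c)
    (hu0 : ∀ m, 0 ≤ u m) (hv0 : ∀ k, 0 ≤ v k) (hv1 : ∀ k, v k ≤ 1)
    (hφ : Tendsto φ atTop atTop)
    (h : ∀ ε : ℝ, 0 < ε → ∀ᶠ m in atTop, u m ≤ (c + ε) * v (φ m)) :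
    limsup u atTop ≤ c * limsup v atTop := by
  set V := limsup v atTop with hV
  have hV0 : 0 ≤ V := le_limsup_of_frequently_le (Frequently.of_forall hv0)
    (isBoundedUnder_of ⟨1, hv1⟩)
  have hV1 : V ≤ 1 := limsup_le_of_le (isCoboundedUnder_le_of_le atTop hv0)
    (Eventually.of_forall hv1)
  have key : ∀ ε : ℝ, 0 < ε → ε ≤ 1 → limsup u atTop ≤ c * V + ε * (c + 2) := by
    intro ε hε hε1
    have h1 : ∀ᶠ k in atTop, v k < V + ε :=
      eventually_lt_of_limsup_lt (by linarith) (isBoundedUnder_of ⟨1, hv1⟩)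
    have h2 := (hφ.eventually h1).and (h ε hε)
    have h3 : limsup u atTop ≤ (c + ε) * (V + ε) := by
      refine limsup_le_of_le (isCoboundedUnder_le_of_le atTop hu0) (h2.mono ?_)
      rintro m ⟨ha, hb⟩
      have : (c + ε) * v (φ m) ≤ (c + ε) * (V + ε) :=
        mul_le_mul_of_nonneg_left ha.le (by linarith)
      linarith
    have e1 : ε * V ≤ ε * 1 := mul_le_mul_of_nonneg_left hV1 hε.le
    have e2 : ε * ε ≤ ε * 1 := mul_le_mul_of_nonneg_left hε1 hε.le
    nlinarith [h3]
  refine le_of_forall_pos_le_add fun r hr => ?_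
  rcases le_or_gt r (c + 2) with hrc | hrc
  · have h4 := key (r / (c + 2)) (by positivity) (by rw [div_le_one (by linarith)]; exact hrc)
    calc limsup u atTop ≤ c * V + r / (c + 2) * (c + 2) := h4
      _ = c * V + r := by field_simp
  · have h4 := key 1 one_pos le_rfl
    calc limsup u atTop ≤ c * V + 1 * (c + 2) := h4
      _ ≤ c * V + r := by linarith

lemma ratio_tendsto' (a b c' : ℝ) (ha : 0 < a) :
    Tendsto (fun k : ℕ => (a * (k : ℝ) + b) / (a * (k : ℝ) + c')) atTop (nhds 1) := by
  have hden : Tendsto (fun k : ℕ => a * (k : ℝ) + c') atTop atTop :=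
    tendsto_atTop_add_const_right _ c' (tendsto_natCast_atTop_atTop.const_mul_atTop ha)
  have hpos : ∀ᶠ k : ℕ in atTop, (0 : ℝ) < a * (k : ℝ) + c' := hden.eventually_gt_atTop 0
  have heq : (fun k : ℕ => 1 + (b - c') / (a * (k : ℝ) + c')) =ᶠ[atTop]
      (fun k : ℕ => (a * (k : ℝ) + b) / (a * (k : ℝ) + c')) := by
    filter_upwards [hpos] with k hk
    field_simp
    ring
  refine Tendsto.congr' heq ?_
  simpa using tendsto_const_nhds.add (Tendsto.div_atTop (tendsto_const_nhds (x := b - c')) hden)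

/-- Main upper comparison. -/
lemma dens_comp {d : ℕ} (n i : ℕ) (hn : 1 ≤ n) (C B : Set (Fin d → ℤ))
    (h : ∀ w ∈ C, ∃ x ∈ B, ∀ j, -(i : ℤ) ≤ w j - n * x j ∧ w j - n * x j ≤ n - 1 + i) :
    upperDensity d C ≤ (((n : ℝ) + 2 * i) / n) ^ d * upperDensity d B := by
  have hnR : (0 : ℝ) < n := by exact_mod_cast hn
  set c : ℝ := (((n : ℝ) + 2 * i) / n) ^ d with hcdef
  have hc : 0 ≤ c := by positivity
  set φ : ℕ → ℕ := fun m => (m + i) / n + 1 with hφdef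
  have hφ : Tendsto φ atTop atTop := by
    rw [tendsto_atTop_atTop]
    intro bb
    refine ⟨n * bb, fun m hm => ?_⟩
    have h1 : bb ≤ (m + i) / n := (Nat.le_div_iff_mul_le (by omega)).2 (by nlinarith)
    show bb ≤ (m + i) / n + 1
    omega
  rw [upperDensity_eq, upperDensity_eq]
  refine limsup_le_mul_limsup _ _ φ c hc (densSeq_nonneg d C) (densSeq_nonneg d B)
    (densSeq_le_one d B) hφ ?_
  intro ε hε
  have hten : Tendsto (fun m : ℕ => c * ((2 * (m : ℝ) + (2 * i + 3 * n)) / (2 * m + 1)) ^ d)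
      atTop (nhds c) := by
    have h1 := (ratio_tendsto' 2 (2 * i + 3 * n) 1 two_pos).pow d
    rw [one_pow] at h1
    simpa using tendsto_const_nhds.mul h1
  have hev := hten.eventually_lt_const (show c < c + ε by linarith)
  filter_upwards [hev] with m hm
  -- pointwise inequality
  set N1 : ℝ := ((C ∩ cube d m).ncard : ℝ) with hN1
  set N2 : ℝ := ((B ∩ cube d (φ m)).ncard : ℝ) with hN2
  have hN2nn : 0 ≤ N2 := by positivity
  have hcount : N1 ≤ N2 * ((n : ℝ) + 2 * i) ^ d := by
    have := count_upper n i m hn C B h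
    calc N1 ≤ (((B ∩ cube d ((m + i) / n + 1)).ncard * (n + 2 * i) ^ d : ℕ) : ℝ) := by
          rw [hN1]; exact_mod_cast this
      _ = N2 * ((n : ℝ) + 2 * i) ^ d := by rw [hN2, hφdef]; push_cast; ring
  have hφfact : n * (2 * φ m + 1) ≤ 2 * m + 2 * i + 3 * n := by
    have hdm := Nat.div_add_mod (m + i) n
    have hexp : n * (2 * φ m + 1) = 2 * (n * ((m + i) / n)) + 3 * n := by rw [hφdef]; ring
    omega
  have hφR : (n : ℝ) * (2 * (φ m : ℝ) + 1) ≤ 2 * m + 2 * i + 3 * n := by exact_mod_cast hφfact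
  have hbase : ((n : ℝ) + 2 * i) * (2 * (φ m : ℝ) + 1) ≤
      ((n : ℝ) + 2 * i) / n * (2 * (m : ℝ) + (2 * i + 3 * n)) := by
    have e1 : ((n : ℝ) + 2 * i) * (2 * (φ m : ℝ) + 1) =
        ((n : ℝ) + 2 * i) / n * ((n : ℝ) * (2 * (φ m : ℝ) + 1)) := by
      field_simp
    rw [e1]
    refine mul_le_mul_of_nonneg_left ?_ (by positivity)
    linarith
  have hpow2 : ((n : ℝ) + 2 * i) ^ d * (2 * (φ m : ℝ) + 1) ^ d ≤
      c * (2 * (m : ℝ) + (2 * i + 3 * n)) ^ d := by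
    rw [hcdef, ← mul_pow, ← mul_pow]
    exact pow_le_pow_left₀ (by positivity) hbase d
  have key : N1 * ((2 * (φ m : ℝ) + 1) ^ d) ≤ N2 * (c * (2 * (m : ℝ) + (2 * i + 3 * n)) ^ d) := by
    calc N1 * ((2 * (φ m : ℝ) + 1) ^ d) ≤ (N2 * ((n : ℝ) + 2 * i) ^ d) * ((2 * (φ m : ℝ) + 1) ^ d) := by
          exact mul_le_mul_of_nonneg_right hcount (by positivity)
      _ = N2 * (((n : ℝ) + 2 * i) ^ d * (2 * (φ m : ℝ) + 1) ^ d) := by ring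
      _ ≤ N2 * (c * (2 * (m : ℝ) + (2 * i + 3 * n)) ^ d) :=
          mul_le_mul_of_nonneg_left hpow2 hN2nn
  have hgoal : densSeq d C m ≤
      (c * ((2 * (m : ℝ) + (2 * i + 3 * n)) / (2 * m + 1)) ^ d) * densSeq d B (φ m) := by
    have hd1 : (0 : ℝ) < (2 * (m : ℝ) + 1) ^ d := by positivity
    have hd2 : (0 : ℝ) < (2 * (φ m : ℝ) + 1) ^ d := by positivity
    have hrhs : (c * ((2 * (m : ℝ) + (2 * i + 3 * n)) / (2 * m + 1)) ^ d) * densSeq d B (φ m) =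
        (N2 * (c * (2 * (m : ℝ) + (2 * i + 3 * n)) ^ d)) / ((2 * (m : ℝ) + 1) ^ d * (2 * (φ m : ℝ) + 1) ^ d) := by
      rw [densSeq, div_pow]
      field_simp
      ring
    rw [hrhs, densSeq, div_le_div_iff₀ hd1 (by positivity)]
    calc N1 * ((2 * (m : ℝ) + 1) ^ d * (2 * (φ m : ℝ) + 1) ^ d)
        = (N1 * ((2 * (φ m : ℝ) + 1) ^ d)) * (2 * (m : ℝ) + 1) ^ d := by ring
      _ ≤ (N2 * (c * (2 * (m : ℝ) + (2 * i + 3 * n)) ^ d)) * (2 * (m : ℝ) + 1) ^ d :=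
          mul_le_mul_of_nonneg_right key hd1.le
  calc densSeq d C m ≤
      (c * ((2 * (m : ℝ) + (2 * i + 3 * n)) / (2 * m + 1)) ^ d) * densSeq d B (φ m) := hgoal
    _ ≤ (c + ε) * densSeq d B (φ m) :=
        mul_le_mul_of_nonneg_right hm.le (densSeq_nonneg d B (φ m))

/-- Lower comparison: density of `B` is at most that of its scaled version. -/
lemma dens_le_scaled {d : ℕ} (n : ℕ) (hn : 1 ≤ n) (B : Set (Fin d → ℤ)) :
    upperDensity d B ≤ upperDensity d (scaled d n B) := by
  have hnR : (0 : ℝ) < n := by exact_mod_cast hn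
  set φ : ℕ → ℕ := fun k => n * k + n - 1 with hφdef
  have hφ : Tendsto φ atTop atTop := by
    refine tendsto_atTop_mono (fun k => ?_) tendsto_id
    show id k ≤ n * k + n - 1
    have : 1 * k ≤ n * k := Nat.mul_le_mul_right k hn
    simp only [id]
    omega
  have hφcast : ∀ k : ℕ, ((φ k : ℝ)) = n * k + n - 1 := by
    intro k
    rw [hφdef]
    have h1 : (1 : ℕ) ≤ n * k + n := by nlinarith
    push_cast [Nat.cast_sub h1]
    ring
  have := limsup_le_mul_limsup (densSeq d B) (densSeq d (scaled d n B)) φ 1 zero_le_one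
    (densSeq_nonneg d B) (densSeq_nonneg d (scaled d n B)) (densSeq_le_one d (scaled d n B)) hφ ?_
  · rw [upperDensity_eq, upperDensity_eq]
    linarith [this]
  intro ε hε
  have hten : Tendsto
      (fun k : ℕ => ((2 * (n : ℝ) * k + (2 * n - 1)) / (2 * (n : ℝ) * k + n)) ^ d) atTop
      (nhds 1) := by
    have h1 := (ratio_tendsto' (2 * (n : ℝ)) (2 * n - 1) n (by linarith)).pow d
    rw [one_pow] at h1
    exact h1
  have hev := hten.eventually_lt_const (show (1 : ℝ) < 1 + ε by linarith)
  filter_upwards [hev] with k hk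
  set N1 : ℝ := ((B ∩ cube d k).ncard : ℝ) with hN1
  set N2 : ℝ := ((scaled d n B ∩ cube d (φ k)).ncard : ℝ) with hN2
  have hkey : N1 * (n : ℝ) ^ d ≤ N2 := by
    rw [hN1, hN2, hφdef]
    exact_mod_cast count_lower n k hn B
  have hd1 : (0 : ℝ) < (2 * (k : ℝ) + 1) ^ d := by positivity
  have hd2 : (0 : ℝ) < (2 * (φ k : ℝ) + 1) ^ d := by positivity
  have hstep : densSeq d B k ≤
      (((2 * (n : ℝ) * k + (2 * n - 1)) / (2 * (n : ℝ) * k + n)) ^ d) * densSeq d (scaled d n B) (φ k) := by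
    have hrw : (2 * (φ k : ℝ) + 1) = 2 * (n : ℝ) * k + (2 * n - 1) := by
      rw [hφcast]; ring
    have hrhs : (((2 * (n : ℝ) * k + (2 * n - 1)) / (2 * (n : ℝ) * k + n)) ^ d) *
        densSeq d (scaled d n B) (φ k) = N2 / (2 * (n : ℝ) * k + n) ^ d := by
      rw [densSeq, ← hN2, div_pow, hrw]
      have hp1 : (0 : ℝ) < (2 * (n : ℝ) * k + (2 * n - 1)) ^ d := by
        have : (0:ℝ) < 2 * (n : ℝ) * k + (2 * n - 1) := by nlinarith
        positivity
      field_simp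
    rw [hrhs, densSeq, ← hN1, div_le_div_iff₀ hd1 (by positivity)]
    have hexp : (2 * (n : ℝ) * k + n) ^ d = (n : ℝ) ^ d * (2 * (k : ℝ) + 1) ^ d := by
      rw [← mul_pow]
      congr 1
      ring
    calc N1 * (2 * (n : ℝ) * k + n) ^ d = (N1 * (n : ℝ) ^ d) * (2 * (k : ℝ) + 1) ^ d := by
          rw [hexp]; ring
      _ ≤ N2 * (2 * (k : ℝ) + 1) ^ d := mul_le_mul_of_nonneg_right hkey hd1.le
  calc densSeq d B k ≤
      (((2 * (n : ℝ) * k + (2 * n - 1)) / (2 * (n : ℝ) * k + n)) ^ d) *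
        densSeq d (scaled d n B) (φ k) := hstep
    _ ≤ (1 + ε) * densSeq d (scaled d n B) (φ k) :=
        mul_le_mul_of_nonneg_right hk.le (densSeq_nonneg d (scaled d n B) (φ k))

lemma superBlockSet_eq_scaled (d : ℕ) (A : Set (Fin d → ℤ)) (n : ℕ) :
    superBlockSet d A n = scaled d n (blockSet d A n) := rfl

lemma scaled_hyp {d : ℕ} (n : ℕ) (hn : 1 ≤ n) (B : Set (Fin d → ℤ)) :
    ∀ w ∈ scaled d n B, ∃ x ∈ B, ∀ j,
      -((0 : ℕ) : ℤ) ≤ w j - n * x j ∧ w j - n * x j ≤ n - 1 + ((0 : ℕ) : ℤ) := by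
  rintro w ⟨x, hx, t, ht, rfl⟩
  refine ⟨x, hx, fun j => ?_⟩
  have hb := mem_box.1 ht j
  simp only [Pi.add_apply, Pi.smul_apply, smul_eq_mul]
  push_cast
  omega

lemma addCube_hyp {d : ℕ} (n i : ℕ) (hn : 1 ≤ n) (A : Set (Fin d → ℤ)) :
    ∀ w ∈ A + cube d i, ∃ x ∈ blockSet d A n, ∀ j,
      -(i : ℤ) ≤ w j - n * x j ∧ w j - n * x j ≤ n - 1 + i := by
  intro w hw
  rw [Set.mem_add] at hw
  obtain ⟨a, ha, s, hs, rfl⟩ := hw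
  have hnZ : (0 : ℤ) < n := by exact_mod_cast hn
  refine ⟨fun j => a j / n, ⟨fun j => a j % n, ?_, ?_⟩, fun j => ?_⟩
  · refine mem_box.2 fun j => ⟨Int.emod_nonneg _ hnZ.ne', ?_⟩
    have := Int.emod_lt_of_pos (a j) hnZ
    omega
  · have : ((n : ℤ) • fun j => a j / n) + (fun j => a j % n) = a := by
      funext j
      simp only [Pi.add_apply, Pi.smul_apply, smul_eq_mul]
      exact Int.mul_ediv_add_emod (a j) n
    rw [this]
    exact ha
  · have h1 : (0 : ℤ) ≤ a j % n := Int.emod_nonneg _ hnZ.ne'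
    have h2 := Int.emod_lt_of_pos (a j) hnZ
    have h3 := Int.mul_ediv_add_emod (a j) n
    have h4 := (mem_cube.1 hs j).1
    have h5 := (mem_cube.1 hs j).2
    simp only [Pi.add_apply]
    omega

lemma superBlock_subset {d : ℕ} (n : ℕ) (hn : 1 ≤ n) (A : Set (Fin d → ℤ)) :
    superBlockSet d A n ⊆ A + cube d (n - 1) := by
  rintro w ⟨x, ⟨s, hs, hsA⟩, t, ht, rfl⟩
  rw [Set.mem_add]
  refine ⟨(n : ℤ) • x + s, hsA, t - s, mem_cube.2 fun j => ?_, by abel⟩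
  have h1 := mem_box.1 hs j
  have h2 := mem_box.1 ht j
  have hcast : ((n - 1 : ℕ) : ℤ) = (n : ℤ) - 1 := by omega
  simp only [Pi.sub_apply, hcast]
  omega

lemma cube_mono {d : ℕ} {i j : ℕ} (h : i ≤ j) : cube d i ⊆ cube d j := by
  intro w hw
  refine mem_cube.2 fun l => ?_
  have := mem_cube.1 hw l
  have : -(j : ℤ) ≤ -(i : ℤ) ∧ (i : ℤ) ≤ j := by omega
  have h1 := (mem_cube.1 hw l).1
  have h2 := (mem_cube.1 hw l).2
  omega

theorem stmt_13 (d : ℕ) (hd : 1 ≤ d) (A : Set (Fin d → ℤ)) :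
    ∃ L : ℝ,
      Tendsto (fun i : ℕ => upperDensity d (blockSet d A i)) atTop (nhds L) ∧
      Tendsto (fun i : ℕ => upperDensity d (superBlockSet d A i)) atTop (nhds L) ∧
      Tendsto (fun i : ℕ => upperDensity d (A + cube d i)) atTop (nhds L) := by
  classical
  set f : ℕ → ℝ := fun i => upperDensity d (A + cube d i) with hfdef
  have hfmono : Monotone f := fun i j hij =>
    upperDensity_mono d (Set.add_subset_add_left (cube_mono hij))
  have hfbdd : BddAbove (Set.range f) := ⟨1, by rintro _ ⟨i, rfl⟩; exact upperDensity_le_one d _⟩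
  have hfL : Tendsto f atTop (nhds (⨆ i, f i)) := tendsto_atTop_ciSup hfmono hfbdd
  set L : ℝ := ⨆ i, f i with hLdef
  have hfleL : ∀ i, f i ≤ L := fun i => le_ciSup hfbdd i
  set b : ℕ → ℝ := fun n => upperDensity d (blockSet d A n) with hbdef
  have hsb : ∀ n, 1 ≤ n → upperDensity d (superBlockSet d A n) = b n := by
    intro n hn
    have hnR : (0 : ℝ) < n := by exact_mod_cast hn
    rw [superBlockSet_eq_scaled]
    refine le_antisymm ?_ (dens_le_scaled n hn _)
    have h := dens_comp n 0 hn (scaled d n (blockSet d A n)) (blockSet d A n)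
      (scaled_hyp n hn _)
    have hone : (((n : ℝ) + 2 * ((0 : ℕ) : ℝ)) / n) ^ d = 1 := by
      rw [Nat.cast_zero, mul_zero, add_zero, div_self hnR.ne', one_pow]
    rw [hone, one_mul] at h
    exact h
  have hsubL : ∀ n, 1 ≤ n → b n ≤ L := by
    intro n hn
    rw [← hsb n hn]
    exact (upperDensity_mono d (superBlock_subset n hn A)).trans (hfleL (n - 1))
  have hlow : ∀ i n : ℕ, 1 ≤ n → f i ≤ (((n : ℝ) + 2 * i) / n) ^ d * b n := fun i n hn =>
    dens_comp n i hn (A + cube d i) (blockSet d A n) (addCube_hyp n i hn A)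
  have hbnonneg : ∀ n, 0 ≤ b n := fun n => upperDensity_nonneg d _
  have hble1 : ∀ n, b n ≤ 1 := fun n => upperDensity_le_one d _
  have hbL : Tendsto b atTop (nhds L) := by
    rw [Metric.tendsto_atTop]
    intro ε hε
    obtain ⟨i, hi⟩ : ∃ i, L - ε / 2 < f i :=
      exists_lt_of_lt_ciSup (show L - ε / 2 < ⨆ i, f i from by rw [← hLdef]; linarith)
    have hcn : Tendsto (fun n : ℕ => (((n : ℝ) + 2 * i) / n) ^ d) atTop (nhds 1) := by
      have h1 := (ratio_tendsto' 1 (2 * i) 0 one_pos).pow d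
      rw [one_pow] at h1
      simpa [one_mul, add_zero] using h1
    have hev := hcn.eventually_lt_const (show (1 : ℝ) < 1 + ε / 2 by linarith)
    rw [eventually_atTop] at hev
    obtain ⟨N, hN⟩ := hev
    refine ⟨max N 1, fun n hn => ?_⟩
    have hn1 : 1 ≤ n := le_trans (le_max_right N 1) hn
    have hnN : N ≤ n := le_trans (le_max_left N 1) hn
    have hnR : (0 : ℝ) < n := by exact_mod_cast hn1
    have hc1 : (1 : ℝ) ≤ (((n : ℝ) + 2 * i) / n) ^ d := by
      have h2 : (1 : ℝ) ≤ ((n : ℝ) + 2 * i) / n := by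
        rw [le_div_iff₀ hnR]
        have : (0 : ℝ) ≤ 2 * (i : ℝ) := by positivity
        linarith
      exact one_le_pow₀ h2
    have hkey := hlow i n hn1
    have hcb : (((n : ℝ) + 2 * i) / n) ^ d * b n ≤ b n + ((((n : ℝ) + 2 * i) / n) ^ d - 1) := by
      have h1 : (((n : ℝ) + 2 * i) / n) ^ d * b n =
          b n + ((((n : ℝ) + 2 * i) / n) ^ d - 1) * b n := by ring
      have h2 : ((((n : ℝ) + 2 * i) / n) ^ d - 1) * b n ≤
          ((((n : ℝ) + 2 * i) / n) ^ d - 1) * 1 :=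
        mul_le_mul_of_nonneg_left (hble1 n) (by linarith)
      linarith
    have hcsmall := hN n hnN
    have hblow : L - ε < b n := by linarith
    have hbup : b n ≤ L := hsubL n hn1
    rw [Real.dist_eq, abs_lt]
    constructor <;> linarith
  refine ⟨L, hbL, ?_, hfL⟩
  have heq : (fun n => upperDensity d (superBlockSet d A n)) =ᶠ[atTop] b :=
    (eventually_ge_atTop 1).mono fun n hn => hsb n hn
  exact Tendsto.congr' heq.symm hbL
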